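/- For every t ≥ 1 there exists a constant K > 0 (depending only on t) such that: for all σ > 0 and τ > 0 with σ^t ≤ τ, if X ~ N(0, σ²), then E[|X|^t · 1{|X|^t > τ}] ≤ K τ · P(|X|^t > τ); equivalently, the conditional expectation E[|X|^t | |X|^t > τ] is at most K τ. -/

import Mathlib

open MeasureTheory ProbabilityTheory Set Filter
open scoped ENNReal NNReal

namespace CMBaux

open Real

lemma int_glob {s : ℝ} (hs : -1 < s) :
    Integrable (fun x : ℝ => x ^ s * Real.exp (-x ^ 2 / 2)) :=
  (integrable_rpow_mul_exp_neg_mul_sq (b := (1:ℝ)/2) (by norm_num) hs).congr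
    (Filter.Eventually.of_forall fun x => by ring_nf)

lemma int_exp : Integrable (fun x : ℝ => Real.exp (-x ^ 2 / 2)) :=
  (integrable_exp_neg_mul_sq (b := (1:ℝ)/2) (by norm_num)).congr
    (Filter.Eventually.of_forall fun x => by ring_nf)

lemma meas_aux (s : ℝ) : Measurable (fun x : ℝ => x ^ s * Real.exp (-x ^ 2 / 2)) := by
  fun_prop

lemma int_low {t : ℝ} (ht : 1 ≤ t) {b : ℝ} (hb : 1 ≤ b) :
    IntegrableOn (fun u : ℝ => u ^ (t - 2) * Real.exp (-u ^ 2 / 2)) (Ioi b) := by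
  refine Integrable.mono ((int_glob (s := t) (by linarith)).restrict)
    ((meas_aux (t-2)).aestronglyMeasurable.restrict) ?_
  filter_upwards [ae_restrict_mem measurableSet_Ioi] with u hu
  have hu1 : (1:ℝ) ≤ u := le_trans hb (le_of_lt hu)
  have hu0 : (0:ℝ) < u := lt_of_lt_of_le one_pos hu1
  have h1 : u ^ (t-2) ≤ u ^ t := Real.rpow_le_rpow_of_exponent_le hu1 (by linarith)
  have h2 : (0:ℝ) ≤ u ^ (t-2) := Real.rpow_nonneg hu0.le _
  have he : (0:ℝ) < Real.exp (-u ^ 2 / 2) := Real.exp_pos _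
  simp only [Real.norm_eq_abs, abs_mul, abs_of_pos he, abs_of_nonneg h2,
    abs_of_nonneg (Real.rpow_nonneg hu0.le t)]
  exact mul_le_mul_of_nonneg_right h1 he.le

lemma tendsto_rpow_exp (s : ℝ) :
    Tendsto (fun u : ℝ => u ^ s * Real.exp (-u ^ 2 / 2)) atTop (nhds 0) := by
  have h1 : (fun x : ℝ => x ^ s * Real.exp (-(1/2) * x ^ 2)) =o[atTop]
      fun x : ℝ => Real.exp (-(1/2) * x) :=
    rpow_mul_exp_neg_mul_sq_isLittleO_exp_neg (by norm_num) s
  have h2 : Tendsto (fun x : ℝ => Real.exp (-(1/2) * x)) atTop (nhds 0) := by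
    apply Real.tendsto_exp_atBot.comp
    exact (tendsto_const_mul_atBot_of_neg (by norm_num)).mpr tendsto_id
  have := h1.isBigO.trans_tendsto h2
  refine this.congr (fun x => by ring_nf)

/-- Integration by parts identity for the gaussian moment integral. -/
lemma ibp {t : ℝ} (ht : 1 ≤ t) {b : ℝ} (hb : 1 ≤ b) :
    ∫ u in Ioi b, (u ^ t - (t-1) * u ^ (t-2)) * Real.exp (-u ^ 2 / 2)
      = b ^ (t-1) * Real.exp (-b ^ 2 / 2) := by
  have hb0 : (0:ℝ) < b := lt_of_lt_of_le one_pos hb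
  have hderiv : ∀ x ∈ Ici b,
      HasDerivAt (fun u : ℝ => -(u ^ (t-1) * Real.exp (-u ^ 2 / 2)))
        ((x ^ t - (t-1) * x ^ (t-2)) * Real.exp (-x ^ 2 / 2)) x := by
    intro x hx
    have hx0 : (0:ℝ) < x := lt_of_lt_of_le hb0 hx
    have h1 : HasDerivAt (fun u : ℝ => u ^ (t-1)) ((t-1) * x ^ (t-1-1)) x :=
      Real.hasDerivAt_rpow_const (Or.inl hx0.ne')
    have h2 : HasDerivAt (fun u : ℝ => -u ^ 2 / 2) (-x) x := by
      have := ((hasDerivAt_pow 2 x).neg).div_const 2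
      simpa using this.congr_deriv (by ring)
    have h3 : HasDerivAt (fun u : ℝ => Real.exp (-u ^ 2 / 2))
        (Real.exp (-x ^ 2 / 2) * (-x)) x := h2.exp
    have h4 := (h1.mul h3).neg
    have hxt : x ^ t = x ^ (t-1) * x := by
      rw [← Real.rpow_add_one hx0.ne' (t-1)]; norm_num
    have hts : t - 1 - 1 = t - 2 := by ring
    refine h4.congr_deriv ?_
    rw [hts, hxt]; ring
  have hint : IntegrableOn
      (fun u : ℝ => (u ^ t - (t-1) * u ^ (t-2)) * Real.exp (-u ^ 2 / 2)) (Ioi b) := by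
    have h1 : IntegrableOn (fun u : ℝ => u ^ t * Real.exp (-u ^ 2 / 2)) (Ioi b) :=
      (int_glob (by linarith)).restrict
    have h2 := (int_low ht hb).const_mul (t-1)
    exact MeasureTheory.IntegrableOn.congr_fun (h1.sub h2) (fun u _ => by simp only [Pi.sub_apply]; ring)
      measurableSet_Ioi
  have htend : Tendsto (fun u : ℝ => -(u ^ (t-1) * Real.exp (-u ^ 2 / 2))) atTop
      (nhds 0) := by
    simpa using (tendsto_rpow_exp (t-1)).neg
  have := integral_Ioi_of_hasDerivAt_of_tendsto' hderiv hint htend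
  rw [this]; ring

lemma int_tail {b : ℝ} (hb : 1 ≤ b) :
    IntegrableOn (fun u : ℝ => (1 + (u ^ 2)⁻¹) * Real.exp (-u ^ 2 / 2)) (Ioi b) := by
  refine Integrable.mono (((int_exp).const_mul 2).restrict)
    ?_ ?_
  · apply Measurable.aestronglyMeasurable
    fun_prop
  filter_upwards [ae_restrict_mem measurableSet_Ioi] with u hu
  have hu1 : (1:ℝ) ≤ u := le_trans hb (le_of_lt hu)
  have h1 : (u ^ 2)⁻¹ ≤ 1 := by
    rw [inv_le_one_iff₀]; right; nlinarith
  have he : (0:ℝ) < Real.exp (-u ^ 2 / 2) := Real.exp_pos _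
  have h2 : (0:ℝ) ≤ (u ^ 2)⁻¹ := by positivity
  simp only [Real.norm_eq_abs, abs_mul, abs_of_pos he,
    abs_of_nonneg (by linarith : (0:ℝ) ≤ 1 + (u ^ 2)⁻¹),
    abs_of_nonneg (by norm_num : (0:ℝ) ≤ (2:ℝ))]
  nlinarith

lemma tail_ibp {b : ℝ} (hb : 1 ≤ b) :
    ∫ u in Ioi b, (1 + (u ^ 2)⁻¹) * Real.exp (-u ^ 2 / 2)
      = b⁻¹ * Real.exp (-b ^ 2 / 2) := by
  have hb0 : (0:ℝ) < b := lt_of_lt_of_le one_pos hb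
  have hderiv : ∀ x ∈ Ici b,
      HasDerivAt (fun u : ℝ => -(u⁻¹ * Real.exp (-u ^ 2 / 2)))
        ((1 + (x ^ 2)⁻¹) * Real.exp (-x ^ 2 / 2)) x := by
    intro x hx
    have hx0 : (0:ℝ) < x := lt_of_lt_of_le hb0 hx
    have h1 : HasDerivAt (fun u : ℝ => u⁻¹) (-(x ^ 2)⁻¹) x := hasDerivAt_inv hx0.ne'
    have h2 : HasDerivAt (fun u : ℝ => -u ^ 2 / 2) (-x) x := by
      have := ((hasDerivAt_pow 2 x).neg).div_const 2
      simpa using this.congr_deriv (by ring)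
    have h3 : HasDerivAt (fun u : ℝ => Real.exp (-u ^ 2 / 2))
        (Real.exp (-x ^ 2 / 2) * (-x)) x := h2.exp
    have h4 := (h1.mul h3).neg
    refine h4.congr_deriv ?_
    have : x⁻¹ * x = 1 := inv_mul_cancel₀ hx0.ne'
    field_simp
    ring
  have hint : IntegrableOn (fun u : ℝ => (1 + (u ^ 2)⁻¹) * Real.exp (-u ^ 2 / 2))
      (Ioi b) := int_tail hb
  have htend : Tendsto (fun u : ℝ => -(u⁻¹ * Real.exp (-u ^ 2 / 2))) atTop (nhds 0) := by
    have h2 : Tendsto (fun u : ℝ => Real.exp (-u ^ 2 / 2)) atTop (nhds 0) := by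
      apply Real.tendsto_exp_atBot.comp
      apply Filter.Tendsto.atBot_div_const (by norm_num)
      exact tendsto_neg_atBot_iff.mpr (tendsto_pow_atTop (by norm_num))
    have := (tendsto_inv_atTop_zero.mul h2).neg
    simpa using this
  have := integral_Ioi_of_hasDerivAt_of_tendsto' hderiv hint htend
  rw [this]; ring

lemma tail_lower {b : ℝ} (hb : 1 ≤ b) :
    Real.exp (-b ^ 2 / 2) ≤ 2 * b * ∫ u in Ioi b, Real.exp (-u ^ 2 / 2) := by
  have hb0 : (0:ℝ) < b := lt_of_lt_of_le one_pos hb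
  have key : b⁻¹ * Real.exp (-b ^ 2 / 2) ≤ 2 * ∫ u in Ioi b, Real.exp (-u ^ 2 / 2) := by
    rw [← tail_ibp hb, ← MeasureTheory.integral_const_mul]
    refine setIntegral_mono_on ?_ ?_ measurableSet_Ioi ?_
    · exact int_tail hb
    · exact ((int_exp).const_mul 2).restrict
    · intro u hu
      have hu1 : (1:ℝ) ≤ u := le_trans hb (le_of_lt hu)
      have h1 : (u ^ 2)⁻¹ ≤ 1 := by rw [inv_le_one_iff₀]; right; nlinarith
      have he : (0:ℝ) < Real.exp (-u ^ 2 / 2) := Real.exp_pos _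
      nlinarith
  calc Real.exp (-b ^ 2 / 2) = b * (b⁻¹ * Real.exp (-b ^ 2 / 2)) := by
        field_simp
    _ ≤ b * (2 * ∫ u in Ioi b, Real.exp (-u ^ 2 / 2)) :=
        mul_le_mul_of_nonneg_left key hb0.le
    _ = 2 * b * ∫ u in Ioi b, Real.exp (-u ^ 2 / 2) := by ring

/-- Core standardized bound. -/
lemma core (t : ℝ) (ht : 1 ≤ t) :
    ∃ K > 0, ∀ b : ℝ, 1 ≤ b →
      (∫ u in Ioi b, u ^ t * Real.exp (-u ^ 2 / 2))
        ≤ K * b ^ t * ∫ u in Ioi b, Real.exp (-u ^ 2 / 2) := by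
  have ht0 : (0:ℝ) < t := lt_of_lt_of_le one_pos ht
  set B : ℝ := max 1 (Real.sqrt (2 * (t - 1))) with hBdef
  have hB1 : (1:ℝ) ≤ B := le_max_left _ _
  have hB0 : (0:ℝ) < B := lt_of_lt_of_le one_pos hB1
  set C : ℝ := ∫ u in Ioi (1:ℝ), u ^ t * Real.exp (-u ^ 2 / 2) with hCdef
  have hC0 : 0 ≤ C := setIntegral_nonneg measurableSet_Ioi (fun u hu =>
    mul_nonneg (Real.rpow_nonneg (le_trans zero_le_one (le_of_lt hu)) t) (Real.exp_pos _).le)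
  set c : ℝ := Real.exp (-B ^ 2 / 2) / (2 * B) with hcdef
  have hc0 : 0 < c := by positivity
  refine ⟨max 4 (C / c), lt_of_lt_of_le (by norm_num) (le_max_left _ _), ?_⟩
  intro b hb
  have hb0 : (0:ℝ) < b := lt_of_lt_of_le one_pos hb
  set J : ℝ := ∫ u in Ioi b, u ^ t * Real.exp (-u ^ 2 / 2) with hJdef
  set T : ℝ := ∫ u in Ioi b, Real.exp (-u ^ 2 / 2) with hTdef
  have hJ0 : 0 ≤ J := setIntegral_nonneg measurableSet_Ioi (fun u hu =>
    mul_nonneg (Real.rpow_nonneg (le_trans hb0.le (le_of_lt hu)) t) (Real.exp_pos _).le)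
  have hT0 : 0 ≤ T := setIntegral_nonneg measurableSet_Ioi (fun u _ => (Real.exp_pos _).le)
  have h1 : IntegrableOn (fun u : ℝ => u ^ t * Real.exp (-u ^ 2 / 2)) (Ioi b) :=
    (int_glob (by linarith)).restrict
  have h2 := int_low ht hb
  have hTlow : Real.exp (-b ^ 2 / 2) ≤ 2 * b * T := tail_lower hb
  have key : J - (t-1) * (∫ u in Ioi b, u ^ (t-2) * Real.exp (-u ^ 2 / 2))
      = b ^ (t-1) * Real.exp (-b ^ 2 / 2) := by
    rw [← ibp ht hb, hJdef, ← MeasureTheory.integral_const_mul,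
      ← integral_sub h1 (h2.const_mul _)]
    exact setIntegral_congr_fun measurableSet_Ioi (fun u _ => by ring)
  have hlow : (t-1) * (∫ u in Ioi b, u ^ (t-2) * Real.exp (-u ^ 2 / 2))
      ≤ (t-1) * ((b ^ 2)⁻¹ * J) := by
    refine mul_le_mul_of_nonneg_left ?_ (by linarith)
    have hmono : (∫ u in Ioi b, u ^ (t-2) * Real.exp (-u ^ 2 / 2))
        ≤ ∫ u in Ioi b, (b ^ 2)⁻¹ * (u ^ t * Real.exp (-u ^ 2 / 2)) := by
      refine setIntegral_mono_on h2 (h1.const_mul _) measurableSet_Ioi ?_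
      intro u hu
      have hu1 : (1:ℝ) ≤ u := le_trans hb (le_of_lt hu)
      have hu0 : (0:ℝ) < u := lt_of_lt_of_le one_pos hu1
      have hub : b ≤ u := le_of_lt hu
      have hrw : u ^ (t-2) = u ^ t / u ^ 2 := by
        rw [Real.rpow_sub hu0 t 2, show ((2:ℝ) = ((2:ℕ):ℝ)) by norm_num,
          Real.rpow_natCast]
      have he : (0:ℝ) < Real.exp (-u ^ 2 / 2) := Real.exp_pos _
      have ht' : (0:ℝ) ≤ u ^ t := Real.rpow_nonneg hu0.le t
      have hdiv : u ^ t / u ^ 2 ≤ u ^ t / b ^ 2 := by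
        apply div_le_div_of_nonneg_left ht' (by positivity) (by nlinarith)
      rw [hrw]
      calc u ^ t / u ^ 2 * Real.exp (-u ^ 2 / 2)
          ≤ u ^ t / b ^ 2 * Real.exp (-u ^ 2 / 2) :=
            mul_le_mul_of_nonneg_right hdiv he.le
        _ = (b ^ 2)⁻¹ * (u ^ t * Real.exp (-u ^ 2 / 2)) := by ring
    calc (∫ u in Ioi b, u ^ (t-2) * Real.exp (-u ^ 2 / 2))
        ≤ ∫ u in Ioi b, (b ^ 2)⁻¹ * (u ^ t * Real.exp (-u ^ 2 / 2)) := hmono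
      _ = (b ^ 2)⁻¹ * J := by rw [MeasureTheory.integral_const_mul]
  have hbt : b ^ (t-1) * b = b ^ t := by
    rw [← Real.rpow_add_one hb0.ne' (t-1)]; norm_num
  have hbt0 : (0:ℝ) ≤ b ^ (t-1) := Real.rpow_nonneg hb0.le _
  by_cases hcase : 2 * (t - 1) ≤ b ^ 2
  · -- large b : absorb
    have habs : (t-1) * ((b ^ 2)⁻¹ * J) ≤ J / 2 := by
      have hb2 : (0:ℝ) < b ^ 2 := by positivity
      rw [div_eq_mul_inv J 2]
      have : (t-1) * (b ^ 2)⁻¹ ≤ 2⁻¹ := by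
        rw [mul_inv_le_iff₀ hb2]
        nlinarith
      calc (t-1) * ((b ^ 2)⁻¹ * J) = ((t-1) * (b ^ 2)⁻¹) * J := by ring
        _ ≤ 2⁻¹ * J := mul_le_mul_of_nonneg_right this hJ0
        _ = J * 2⁻¹ := by ring
    have hJle : J ≤ 2 * (b ^ (t-1) * Real.exp (-b ^ 2 / 2)) := by nlinarith [key, hlow, habs]
    have hstep : b ^ (t-1) * Real.exp (-b ^ 2 / 2) ≤ b ^ (t-1) * (2 * b * T) :=
      mul_le_mul_of_nonneg_left hTlow hbt0
    have : J ≤ 4 * b ^ t * T := by nlinarith [hstep, hbt]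
    have hbtT : 0 ≤ b ^ t * T := mul_nonneg (Real.rpow_nonneg hb0.le t) hT0
    calc J ≤ 4 * b ^ t * T := this
      _ = 4 * (b ^ t * T) := by ring
      _ ≤ max 4 (C / c) * (b ^ t * T) :=
          mul_le_mul_of_nonneg_right (le_max_left _ _) hbtT
      _ = max 4 (C / c) * b ^ t * T := by ring
  · -- small b : b ≤ B
    have hb2 : b ^ 2 < 2 * (t - 1) := not_le.mp hcase
    have hbB : b ≤ B := by
      have h3 : b = Real.sqrt (b ^ 2) := (Real.sqrt_sq hb0.le).symm
      have h4 : Real.sqrt (b ^ 2) ≤ Real.sqrt (2 * (t-1)) :=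
        Real.sqrt_le_sqrt hb2.le
      exact le_trans (h3 ▸ h4) (le_max_right _ _)
    have hJC : J ≤ C := by
      refine setIntegral_mono_set ((int_glob (s := t) (by linarith)).restrict) ?_ ?_
      · filter_upwards [ae_restrict_mem measurableSet_Ioi] with u hu
        exact mul_nonneg (Real.rpow_nonneg (le_trans zero_le_one (le_of_lt hu)) t)
          (Real.exp_pos _).le
      · exact HasSubset.Subset.eventuallyLE (Ioi_subset_Ioi hb)
    have hTc : c ≤ T := by
      have h6 := tail_lower hB1
      have h7 : (∫ u in Ioi B, Real.exp (-u ^ 2 / 2)) ≤ T := by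
        refine setIntegral_mono_set (int_exp.restrict) ?_ ?_
        · filter_upwards with u using (Real.exp_pos _).le
        · exact HasSubset.Subset.eventuallyLE (Ioi_subset_Ioi hbB)
      have : c ≤ ∫ u in Ioi B, Real.exp (-u ^ 2 / 2) := by
        rw [hcdef, div_le_iff₀ (by positivity)]
        calc Real.exp (-B ^ 2 / 2) ≤ 2 * B * ∫ u in Ioi B, Real.exp (-u ^ 2 / 2) := h6
          _ = (∫ u in Ioi B, Real.exp (-u ^ 2 / 2)) * (2 * B) := by ring
      linarith
    have hbt1 : (1:ℝ) ≤ b ^ t := Real.one_le_rpow hb ht0.le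
    have hcbT : c ≤ b ^ t * T := by nlinarith
    have hbtT : 0 ≤ b ^ t * T := mul_nonneg (Real.rpow_nonneg hb0.le t) hT0
    calc J ≤ C := hJC
      _ = (C / c) * c := by field_simp
      _ ≤ (C / c) * (b ^ t * T) :=
          mul_le_mul_of_nonneg_left hcbT (div_nonneg hC0 hc0.le)
      _ ≤ max 4 (C / c) * (b ^ t * T) :=
          mul_le_mul_of_nonneg_right (le_max_right _ _) hbtT
      _ = max 4 (C / c) * b ^ t * T := by ring

lemma scaleT {σ : ℝ} (hσ : 0 < σ) (a : ℝ) :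
    ∫ x in Ioi a, Real.exp (-x ^ 2 / (2 * σ ^ 2))
      = σ * ∫ u in Ioi (a / σ), Real.exp (-u ^ 2 / 2) := by
  have h := integral_comp_mul_left_Ioi
    (fun x : ℝ => Real.exp (-x ^ 2 / (2 * σ ^ 2))) (a / σ) hσ
  rw [show σ * (a / σ) = a by field_simp] at h
  simp only [smul_eq_mul] at h
  have hcong : (∫ x in Ioi (a / σ), Real.exp (-(σ * x) ^ 2 / (2 * σ ^ 2)))
      = ∫ u in Ioi (a / σ), Real.exp (-u ^ 2 / 2) := by
    refine setIntegral_congr_fun measurableSet_Ioi (fun x _ => ?_)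
    rw [show -(σ * x) ^ 2 / (2 * σ ^ 2) = -x ^ 2 / 2 by field_simp]
  rw [hcong] at h
  rw [h]
  field_simp

lemma scaleJ {σ : ℝ} (hσ : 0 < σ) {a : ℝ} (ha : 0 < a) (s : ℝ) :
    ∫ x in Ioi a, x ^ s * Real.exp (-x ^ 2 / (2 * σ ^ 2))
      = σ ^ (s + 1) * ∫ u in Ioi (a / σ), u ^ s * Real.exp (-u ^ 2 / 2) := by
  have h := integral_comp_mul_left_Ioi
    (fun x : ℝ => x ^ s * Real.exp (-x ^ 2 / (2 * σ ^ 2))) (a / σ) hσ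
  rw [show σ * (a / σ) = a by field_simp] at h
  simp only [smul_eq_mul] at h
  have hcong : (∫ x in Ioi (a / σ), (σ * x) ^ s * Real.exp (-(σ * x) ^ 2 / (2 * σ ^ 2)))
      = ∫ x in Ioi (a / σ), σ ^ s * (x ^ s * Real.exp (-x ^ 2 / 2)) := by
    refine setIntegral_congr_fun measurableSet_Ioi (fun x hx => ?_)
    have hx0 : 0 < x := lt_trans (div_pos ha hσ) hx
    rw [Real.mul_rpow hσ.le hx0.le,
      show -(σ * x) ^ 2 / (2 * σ ^ 2) = -x ^ 2 / 2 by field_simp]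
    ring
  rw [hcong, MeasureTheory.integral_const_mul] at h
  have hσs : σ ^ (s + 1) = σ ^ s * σ := Real.rpow_add_one hσ.ne' s
  have h2 : σ * (σ ^ s * ∫ u in Ioi (a / σ), u ^ s * Real.exp (-u ^ 2 / 2))
      = σ * (σ⁻¹ * ∫ x in Ioi a, x ^ s * Real.exp (-x ^ 2 / (2 * σ ^ 2))) := by rw [h]
  rw [mul_inv_cancel_left₀ hσ.ne'] at h2
  rw [← h2, hσs]
  ring

lemma core' (t : ℝ) (ht : 1 ≤ t) :
    ∃ K > 0, ∀ σ a : ℝ, 0 < σ → σ ≤ a →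
      (∫ x in Ioi a, x ^ t * Real.exp (-x ^ 2 / (2 * σ ^ 2)))
        ≤ K * a ^ t * ∫ x in Ioi a, Real.exp (-x ^ 2 / (2 * σ ^ 2)) := by
  obtain ⟨K, hK0, hK⟩ := core t ht
  refine ⟨K, hK0, fun σ a hσ ha => ?_⟩
  have ha0 : 0 < a := lt_of_lt_of_le hσ ha
  have hb : 1 ≤ a / σ := (one_le_div hσ).mpr ha
  rw [scaleJ hσ ha0 t, scaleT hσ a]
  have h := hK (a / σ) hb
  have hσt : σ ^ t * (a / σ) ^ t = a ^ t := by
    rw [← Real.mul_rpow hσ.le (by positivity), show σ * (a / σ) = a by field_simp]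
  have hσt1 : σ ^ (t + 1) = σ ^ t * σ := Real.rpow_add_one hσ.ne' t
  have hσt0 : (0:ℝ) ≤ σ ^ t := Real.rpow_nonneg hσ.le t
  calc σ ^ (t + 1) * ∫ u in Ioi (a / σ), u ^ t * Real.exp (-u ^ 2 / 2)
      = σ ^ t * σ * ∫ u in Ioi (a / σ), u ^ t * Real.exp (-u ^ 2 / 2) := by rw [hσt1]
    _ ≤ σ ^ t * σ * (K * (a / σ) ^ t * ∫ u in Ioi (a / σ), Real.exp (-u ^ 2 / 2)) := by
        refine mul_le_mul_of_nonneg_left h (by positivity)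
    _ = K * (σ ^ t * (a / σ) ^ t) * (σ * ∫ u in Ioi (a / σ), Real.exp (-u ^ 2 / 2)) := by
        ring
    _ = K * a ^ t * (σ * ∫ u in Ioi (a / σ), Real.exp (-u ^ 2 / 2)) := by rw [hσt]

end CMBaux

open CMBaux

theorem conditional_moment_bound (t : ℝ) (ht : 1 ≤ t) :
    ∃ K > 0, ∀ σ τ : ℝ, 0 < σ → 0 < τ → σ ^ t ≤ τ →
      ∫ x in {x : ℝ | τ < |x| ^ t}, |x| ^ t ∂(gaussianReal 0 (σ ^ 2).toNNReal)
        ≤ K * τ * ((gaussianReal 0 (σ ^ 2).toNNReal) {x : ℝ | τ < |x| ^ t}).toReal := by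
  obtain ⟨K, hK0, hK⟩ := CMBaux.core' t ht
  refine ⟨K, hK0, ?_⟩
  intro σ τ hσ hτ hστ
  have ht0 : (0:ℝ) < t := lt_of_lt_of_le one_pos ht
  have htne : t ≠ 0 := ht0.ne'
  set v : NNReal := (σ ^ 2).toNNReal with hvdef
  have hv : v ≠ 0 := by
    simp only [hvdef, ne_eq, Real.toNNReal_eq_zero, not_le]
    positivity
  have hvr : ((v : ℝ)) = σ ^ 2 := Real.coe_toNNReal _ (sq_nonneg σ)
  set a : ℝ := τ ^ t⁻¹ with hadef
  have ha0 : 0 < a := Real.rpow_pos_of_pos hτ _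
  have hat : a ^ t = τ := Real.rpow_inv_rpow hτ.le htne
  have hσa : σ ≤ a := by
    have h1 : σ = (σ ^ t) ^ t⁻¹ := (Real.rpow_rpow_inv hσ.le htne).symm
    rw [h1, hadef]
    exact Real.rpow_le_rpow (Real.rpow_nonneg hσ.le t) hστ (inv_nonneg.mpr ht0.le)
  have hS : {x : ℝ | τ < |x| ^ t} = Iio (-a) ∪ Ioi a := by
    ext x
    simp only [mem_setOf_eq, mem_union, mem_Iio, mem_Ioi]
    constructor
    · intro h
      have h2 : a < |x| := by
        have := Real.rpow_lt_rpow hτ.le h (inv_pos.mpr ht0)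
        rwa [Real.rpow_rpow_inv (abs_nonneg x) htne] at this
      rcases lt_abs.mp h2 with h3 | h3
      · right; exact h3
      · left; linarith
    · intro h
      have h2 : a < |x| := by
        rcases h with h3 | h3
        · exact lt_abs.mpr (Or.inr (by linarith))
        · exact lt_abs.mpr (Or.inl h3)
      have := Real.rpow_lt_rpow ha0.le h2 ht0
      rwa [hat] at this
  rw [hS, gaussianReal_of_var_ne_zero 0 hv]
  have hSm : MeasurableSet (Iio (-a) ∪ Ioi a) :=
    measurableSet_Iio.union measurableSet_Ioi
  have hpdfm : Measurable fun x => (gaussianPDFReal 0 v x).toNNReal :=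
    (measurable_gaussianPDFReal 0 v).real_toNNReal
  have hLHS : (∫ x in Iio (-a) ∪ Ioi a, |x| ^ t ∂(volume.withDensity (gaussianPDF 0 v)))
      = ∫ x in Iio (-a) ∪ Ioi a, gaussianPDFReal 0 v x * |x| ^ t := by
    have hgd : (gaussianPDF 0 v) = fun x => ((gaussianPDFReal 0 v x).toNNReal : ℝ≥0∞) := rfl
    rw [hgd, setIntegral_withDensity_eq_setIntegral_smul hpdfm _ hSm]
    refine setIntegral_congr_fun hSm (fun x _ => ?_)
    rw [NNReal.smul_def, Real.coe_toNNReal _ (gaussianPDFReal_nonneg 0 v x), smul_eq_mul]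
  have hRHS : ((volume.withDensity (gaussianPDF 0 v)) (Iio (-a) ∪ Ioi a)).toReal
      = ∫ x in Iio (-a) ∪ Ioi a, gaussianPDFReal 0 v x := by
    rw [← gaussianReal_of_var_ne_zero 0 hv, gaussianReal_apply_eq_integral 0 hv,
      ENNReal.toReal_ofReal
        (setIntegral_nonneg hSm fun x _ => gaussianPDFReal_nonneg 0 v x)]
  rw [hLHS, hRHS]
  simp only [gaussianPDFReal, sub_zero, hvr]
  set c : ℝ := (Real.sqrt (2 * Real.pi * σ ^ 2))⁻¹ with hcdef
  have hc0 : 0 < c := by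
    rw [hcdef]
    have := Real.pi_pos
    positivity
  simp_rw [mul_assoc, MeasureTheory.integral_const_mul]
  -- notation
  set f : ℝ → ℝ := fun x => Real.exp (-x ^ 2 / (2 * σ ^ 2)) * |x| ^ t with hfdef
  set g : ℝ → ℝ := fun x => Real.exp (-x ^ 2 / (2 * σ ^ 2)) with hgdef
  have hfeven : ∀ x : ℝ, f (-x) = f x := fun x => by
    simp only [hfdef, neg_sq, abs_neg]
  have hgeven : ∀ x : ℝ, g (-x) = g x := fun x => by
    simp only [hgdef, neg_sq]
  have hint_f_Ioi : IntegrableOn f (Ioi a) := by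
    have hbase : Integrable (fun x : ℝ => x ^ t * Real.exp (-(2 * σ ^ 2)⁻¹ * x ^ 2)) :=
      integrable_rpow_mul_exp_neg_mul_sq (by positivity) (by linarith)
    refine MeasureTheory.IntegrableOn.congr_fun hbase.restrict
      (fun x hx => ?_) measurableSet_Ioi
    have hx0 : 0 < x := lt_trans ha0 hx
    rw [hfdef]
    simp only
    rw [abs_of_pos hx0]
    ring_nf
  have hint_g_Ioi : IntegrableOn g (Ioi a) := by
    have hbase : Integrable (fun x : ℝ => Real.exp (-(2 * σ ^ 2)⁻¹ * x ^ 2)) :=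
      integrable_exp_neg_mul_sq (by positivity)
    refine MeasureTheory.IntegrableOn.congr_fun hbase.restrict
      (fun x _ => ?_) measurableSet_Ioi
    rw [hgdef]; simp only; ring_nf
  have hint_f_Iio : IntegrableOn f (Iio (-a)) := by
    rw [← (Measure.measurePreserving_neg (volume : Measure ℝ)).integrableOn_comp_preimage
        (Homeomorph.neg ℝ).measurableEmbedding]
    simp only [Function.comp_def, neg_preimage, neg_Iio, neg_neg]
    exact hint_f_Ioi.congr_fun (fun x _ => (hfeven x).symm) measurableSet_Ioi
  have hint_g_Iio : IntegrableOn g (Iio (-a)) := by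
    rw [← (Measure.measurePreserving_neg (volume : Measure ℝ)).integrableOn_comp_preimage
        (Homeomorph.neg ℝ).measurableEmbedding]
    simp only [Function.comp_def, neg_preimage, neg_Iio, neg_neg]
    exact hint_g_Ioi.congr_fun (fun x _ => (hgeven x).symm) measurableSet_Ioi
  have hdisj : Disjoint (Iio (-a)) (Ioi a) :=
    (Iic_disjoint_Ioi (by linarith)).mono Iio_subset_Iic_self le_rfl
  have flip : ∀ h : ℝ → ℝ, (∀ x, h (-x) = h x) →
      (∫ x in Iio (-a), h x) = ∫ x in Ioi a, h x := by
    intro h hh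
    rw [← MeasureTheory.integral_Iic_eq_integral_Iio, ← integral_comp_neg_Ioi]
    simp_rw [hh]
  have hsplitf : (∫ x in Iio (-a) ∪ Ioi a, f x) = 2 * ∫ x in Ioi a, f x := by
    rw [setIntegral_union hdisj measurableSet_Ioi hint_f_Iio hint_f_Ioi, flip f hfeven]
    ring
  have hsplitg : (∫ x in Iio (-a) ∪ Ioi a, g x) = 2 * ∫ x in Ioi a, g x := by
    rw [setIntegral_union hdisj measurableSet_Ioi hint_g_Iio hint_g_Ioi, flip g hgeven]
    ring
  rw [hsplitf, hsplitg]
  have hIoif : (∫ x in Ioi a, f x)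
      = ∫ x in Ioi a, x ^ t * Real.exp (-x ^ 2 / (2 * σ ^ 2)) := by
    refine setIntegral_congr_fun measurableSet_Ioi (fun x hx => ?_)
    rw [hfdef]
    simp only
    rw [abs_of_pos (lt_trans ha0 hx)]
    ring
  have hmain := hK σ a hσ hσa
  rw [hIoif]
  have hgoal : 2 * (∫ x in Ioi a, x ^ t * Real.exp (-x ^ 2 / (2 * σ ^ 2)))
      ≤ K * τ * (2 * ∫ x in Ioi a, g x) := by
    rw [← hat, hgdef]
    nlinarith [hmain]
  calc c * (2 * ∫ x in Ioi a, x ^ t * Real.exp (-x ^ 2 / (2 * σ ^ 2)))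
      ≤ c * (K * τ * (2 * ∫ x in Ioi a, g x)) :=
        mul_le_mul_of_nonneg_left hgoal hc0.le
    _ = K * (τ * (c * (2 * ∫ x in Ioi a, g x))) := by ring
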